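/- Cluster-deletion update: let S = Σⱼ Dⱼᵀ Vⱼ⁻¹ Dⱼ = M and suppose M and M − M_i are invertible, where M_i = D_iᵀ V_i⁻¹ D_i. Then (M − M_i)⁻¹ D_iᵀ V_i⁻¹ = M⁻¹ D_iᵀ V_i⁻¹ (I − H_i)⁻¹, where H_i = D_i M⁻¹ D_iᵀ V_i⁻¹ and I − H_i is invertible. -/
import Mathlib


open Matrix

theorem cluster_deletion_update {N p : ℕ} (n : Fin N → ℕ)
    (D : ∀ j, Matrix (Fin (n j)) (Fin p) ℝ)
    (V : ∀ j, Matrix (Fin (n j)) (Fin (n j)) ℝ)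
    (hV : ∀ j, IsUnit (V j).det)
    (Mi : Fin N → Matrix (Fin p) (Fin p) ℝ)
    (hMi : ∀ j, Mi j = (D j)ᵀ * (V j)⁻¹ * (D j))
    (M : Matrix (Fin p) (Fin p) ℝ) (hM : M = ∑ j, Mi j)
    (hMinv : IsUnit M.det)
    (i : Fin N)
    (hMMi : IsUnit (M - Mi i).det)
    (Hi : Matrix (Fin (n i)) (Fin (n i)) ℝ)
    (hHi : Hi = D i * M⁻¹ * (D i)ᵀ * (V i)⁻¹)
    (hIH : IsUnit (1 - Hi).det) :
    (M - Mi i)⁻¹ * (D i)ᵀ * (V i)⁻¹ = M⁻¹ * (D i)ᵀ * (V i)⁻¹ * (1 - Hi)⁻¹ := by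
  have key : (D i)ᵀ * (V i)⁻¹ * (1 - Hi)
      = (M - Mi i) * (M⁻¹ * (D i)ᵀ * (V i)⁻¹) := by
    rw [hHi, hMi, Matrix.mul_sub, Matrix.sub_mul, Matrix.mul_one]
    rw [← Matrix.mul_assoc M, ← Matrix.mul_assoc M, Matrix.mul_nonsing_inv M hMinv, Matrix.one_mul]
    simp [Matrix.mul_assoc]
  have h2 : (D i)ᵀ * (V i)⁻¹
      = (M - Mi i) * (M⁻¹ * (D i)ᵀ * (V i)⁻¹ * (1 - Hi)⁻¹) := by
    calc (D i)ᵀ * (V i)⁻¹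
        = (D i)ᵀ * (V i)⁻¹ * ((1 - Hi) * (1 - Hi)⁻¹) := by
          rw [Matrix.mul_nonsing_inv _ hIH, Matrix.mul_one]
      _ = (D i)ᵀ * (V i)⁻¹ * (1 - Hi) * (1 - Hi)⁻¹ := by simp [Matrix.mul_assoc]
      _ = (M - Mi i) * (M⁻¹ * (D i)ᵀ * (V i)⁻¹) * (1 - Hi)⁻¹ := by rw [key]
      _ = (M - Mi i) * (M⁻¹ * (D i)ᵀ * (V i)⁻¹ * (1 - Hi)⁻¹) := by
          rw [Matrix.mul_assoc]
  rw [Matrix.mul_assoc, h2, ← Matrix.mul_assoc, Matrix.nonsing_inv_mul _ hMMi, Matrix.one_mul]
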